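/- For every prime p ≥ 3 and every integer f ≥ 2, the binomial coefficient C(p^f - 1, p^{f-1}) is congruent to p - 1 modulo p^2. -/

import Mathlib

open Nat Finset

/-- Product formula: C(N-1, k) * k! = ∏_{j=1}^{k} (N - j) over ℤ. -/
lemma prod_Icc_sub (N k : ℕ) (h : k < N) :
    (((N - 1).choose k : ℤ)) * (k ! : ℤ) = ∏ j ∈ Icc 1 k, ((N : ℤ) - j) := by
  have h1 : (N - 1).descFactorial k = k ! * (N - 1).choose k :=
    Nat.descFactorial_eq_factorial_mul_choose _ _
  have h2 : ((N - 1).descFactorial k : ℤ) = ∏ j ∈ Icc 1 k, ((N : ℤ) - j) := by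
    rw [Nat.descFactorial_eq_prod_range, Nat.cast_prod]
    rw [show Icc 1 k = Ico 1 (k + 1) from (Finset.Ico_add_one_right_eq_Icc 1 k).symm,
      Finset.prod_Ico_eq_prod_range]
    apply Finset.prod_congr (by simp)
    intro i hi
    simp only [Finset.mem_range] at hi
    omega
  rw [← h2, h1]
  push_cast
  ring

lemma filter_dvd_image (p m : ℕ) (hp : 0 < p) :
    (Icc 1 (p * m)).filter (fun j => p ∣ j) = (Icc 1 m).image (fun i => p * i) := by
  ext j
  simp only [Finset.mem_filter, Finset.mem_Icc, Finset.mem_image]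
  constructor
  · rintro ⟨⟨h1, h2⟩, i, rfl⟩
    refine ⟨i, ⟨?_, Nat.le_of_mul_le_mul_left h2 hp⟩, rfl⟩
    rcases Nat.eq_zero_or_pos i with h | h
    · subst h; simp at h1
    · exact h
  · rintro ⟨i, ⟨h1, h2⟩, rfl⟩
    exact ⟨⟨Nat.mul_pos hp h1, Nat.mul_le_mul_left p h2⟩, i, rfl⟩

/-- Split a product over {1,...,pm} into non-multiples of p and multiples of p. -/
lemma prod_split (p m : ℕ) (hp : 0 < p) (g : ℕ → ℤ) :
    ∏ j ∈ Icc 1 (p * m), g j =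
      (∏ j ∈ (Icc 1 (p * m)).filter (fun j => ¬ p ∣ j), g j) * ∏ i ∈ Icc 1 m, g (p * i) := by
  rw [← Finset.prod_filter_mul_prod_filter_not (Icc 1 (p * m)) (fun j => ¬ p ∣ j)]
  congr 1
  have : (Icc 1 (p * m)).filter (fun j => ¬ ¬ p ∣ j) = (Icc 1 (p * m)).filter (fun j => p ∣ j) := by
    apply Finset.filter_congr; intro x _; simp
  rw [this, filter_dvd_image p m hp, Finset.prod_image]
  intro a _ b _ hab
  exact Nat.eq_of_mul_eq_mul_left hp hab

lemma card_not_dvd (p m : ℕ) (hp : 0 < p) :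
    ((Icc 1 (p * m)).filter (fun j => ¬ p ∣ j)).card = p * m - m := by
  have h1 := Finset.card_filter_add_card_filter_not (s := Icc 1 (p * m))
    (p := fun j => p ∣ j)
  have h2 : ((Icc 1 (p * m)).filter (fun j => p ∣ j)).card = m := by
    rw [filter_dvd_image p m hp, Finset.card_image_of_injective _
      (fun a b hab => Nat.eq_of_mul_eq_mul_left hp hab), Nat.card_Icc]
    omega
  rw [Nat.card_Icc] at h1
  omega

/-- The key integer identity: C(pM-1, M) * B = A * C(M-1, m) with M = p*m. -/
lemma key_identity (p m : ℕ) (hp : 2 ≤ p) (hm : 1 ≤ m) :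
    ((p * (p * m) - 1).choose (p * m) : ℤ) *
        ∏ j ∈ (Icc 1 (p * m)).filter (fun j => ¬ p ∣ j), (j : ℤ) =
      (∏ j ∈ (Icc 1 (p * m)).filter (fun j => ¬ p ∣ j), ((p * (p * m) : ℤ) - j)) *
        ((p * m - 1).choose m : ℤ) := by
  have hp0 : 0 < p := by omega
  have hpm : 0 < p * m := Nat.mul_pos hp0 hm
  have hMlt : p * m < p * (p * m) := by nlinarith
  have hmlt : m < p * m := by nlinarith
  have E1 : ((p * (p * m) - 1).choose (p * m) : ℤ) * ((p * m)! : ℤ) =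
      ∏ j ∈ Icc 1 (p * m), ((p * (p * m) : ℤ) - j) := by
    have h := prod_Icc_sub (p * (p * m)) (p * m) hMlt
    push_cast at h ⊢
    exact h
  have E4 : ((p * m - 1).choose m : ℤ) * (m ! : ℤ) =
      ∏ i ∈ Icc 1 m, ((p * m : ℤ) - i) := by
    have h := prod_Icc_sub (p * m) m hmlt
    push_cast at h ⊢
    exact h
  have E2 : ∏ j ∈ Icc 1 (p * m), ((p * (p * m) : ℤ) - j) =
      (∏ j ∈ (Icc 1 (p * m)).filter (fun j => ¬ p ∣ j), ((p * (p * m) : ℤ) - j)) *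
        ((p : ℤ) ^ m * ∏ i ∈ Icc 1 m, ((p * m : ℤ) - i)) := by
    rw [prod_split p m hp0 (fun j => (p * (p * m) : ℤ) - j)]
    congr 1
    have : ∀ i ∈ Icc 1 m, ((p * (p * m) : ℤ) - (p * i : ℕ)) = (p : ℤ) * ((p * m : ℤ) - i) := by
      intro i _; push_cast; ring
    rw [Finset.prod_congr rfl this, Finset.prod_mul_distrib, Finset.prod_const, Nat.card_Icc]
    simp
  have E3 : ((p * m)! : ℤ) =
      (∏ j ∈ (Icc 1 (p * m)).filter (fun j => ¬ p ∣ j), (j : ℤ)) *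
        ((p : ℤ) ^ m * (m ! : ℤ)) := by
    have hfac : ((p * m)! : ℤ) = ∏ j ∈ Icc 1 (p * m), (j : ℤ) := by
      rw [← Finset.prod_Ico_id_eq_factorial (p * m), ← Finset.Ico_add_one_right_eq_Icc, Nat.cast_prod]
    have hfacm : (m ! : ℤ) = ∏ i ∈ Icc 1 m, (i : ℤ) := by
      rw [← Finset.prod_Ico_id_eq_factorial m, ← Finset.Ico_add_one_right_eq_Icc, Nat.cast_prod]
    rw [hfac, prod_split p m hp0 (fun j => (j : ℤ))]
    congr 1
    have : ∀ i ∈ Icc 1 m, ((p * i : ℕ) : ℤ) = (p : ℤ) * (i : ℤ) := by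
      intro i _; push_cast; ring
    rw [Finset.prod_congr rfl this, Finset.prod_mul_distrib, Finset.prod_const, Nat.card_Icc,
      hfacm]
    simp
  -- now cancel p^m * m!
  have hne : ((p : ℤ) ^ m * (m ! : ℤ)) ≠ 0 := by
    apply mul_ne_zero
    · positivity
    · exact_mod_cast Nat.factorial_ne_zero m
  apply mul_right_cancel₀ hne
  calc ((p * (p * m) - 1).choose (p * m) : ℤ) *
        (∏ j ∈ (Icc 1 (p * m)).filter (fun j => ¬ p ∣ j), (j : ℤ)) *
        ((p : ℤ) ^ m * (m ! : ℤ))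
      = ((p * (p * m) - 1).choose (p * m) : ℤ) * ((p * m)! : ℤ) := by rw [E3]; ring
    _ = ∏ j ∈ Icc 1 (p * m), ((p * (p * m) : ℤ) - j) := E1
    _ = (∏ j ∈ (Icc 1 (p * m)).filter (fun j => ¬ p ∣ j), ((p * (p * m) : ℤ) - j)) *
        ((p : ℤ) ^ m * (((p * m - 1).choose m : ℤ) * (m ! : ℤ))) := by rw [E2, E4]
    _ = (∏ j ∈ (Icc 1 (p * m)).filter (fun j => ¬ p ∣ j), ((p * (p * m) : ℤ) - j)) *
        ((p * m - 1).choose m : ℤ) * ((p : ℤ) ^ m * (m ! : ℤ)) := by ring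

/-- The step in ZMod (p^2): C(p·pm − 1, pm) = C(pm − 1, m). -/
lemma step_zmod (p m : ℕ) (hp : p.Prime) (hp3 : 3 ≤ p) (hm : 1 ≤ m) :
    (((p * (p * m) - 1).choose (p * m) : ℕ) : ZMod (p ^ 2)) =
      (((p * m - 1).choose m : ℕ) : ZMod (p ^ 2)) := by
  have hp0 : 0 < p := hp.pos
  set S := (Icc 1 (p * m)).filter (fun j => ¬ p ∣ j) with hS
  have key := key_identity p m hp.two_le hm
  -- cast the key identity to ZMod (p^2)
  have keyZ : (((p * (p * m) - 1).choose (p * m) : ℕ) : ZMod (p ^ 2)) *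
      (∏ j ∈ S, (j : ZMod (p ^ 2))) =
      (∏ j ∈ S, (((p * (p * m) : ℤ) - j : ℤ) : ZMod (p ^ 2))) *
      (((p * m - 1).choose m : ℕ) : ZMod (p ^ 2)) := by
    have := congrArg (fun x : ℤ => (x : ZMod (p ^ 2))) key
    push_cast at this
    convert this using 2 <;> push_cast <;> ring_nf <;> rfl
  -- each factor of A equals the corresponding factor of -B
  have hzero : ((p * (p * m) : ℕ) : ZMod (p ^ 2)) = 0 := by
    have : (p ^ 2 : ℕ) ∣ p * (p * m) := ⟨m, by ring⟩
    exact (ZMod.natCast_eq_zero_iff _ _).mpr this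
  have hA : (∏ j ∈ S, (((p * (p * m) : ℤ) - j : ℤ) : ZMod (p ^ 2))) =
      ∏ j ∈ S, (j : ZMod (p ^ 2)) := by
    have h1 : ∀ j ∈ S, (((p * (p * m) : ℤ) - j : ℤ) : ZMod (p ^ 2)) = -(j : ZMod (p ^ 2)) := by
      intro j _
      push_cast
      rw [show ((p : ZMod (p ^ 2)) * ((p : ZMod (p ^ 2)) * (m : ZMod (p ^ 2)))) =
        ((p * (p * m) : ℕ) : ZMod (p ^ 2)) by push_cast; ring, hzero]
      ring
    have h2 : ∀ j ∈ S, -(j : ZMod (p ^ 2)) = (-1) * (j : ZMod (p ^ 2)) := by intro j _; ring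
    rw [Finset.prod_congr rfl h1, Finset.prod_congr rfl h2, Finset.prod_mul_distrib,
      Finset.prod_const]
    have hcard : Even S.card := by
      rw [hS, card_not_dvd p m hp0]
      have heven : Even (p - 1) := Nat.Odd.sub_odd (hp.odd_of_ne_two (by omega)) odd_one
      have : p * m - m = (p - 1) * m := by
        cases p with
        | zero => simp
        | succ q => simp [Nat.succ_mul, Nat.add_sub_cancel]
      rw [this]
      exact heven.mul_right m
    rw [hcard.neg_one_pow, one_mul]
  rw [hA] at keyZ
  -- B is a unit
  have hB : IsUnit (∏ j ∈ S, (j : ZMod (p ^ 2))) := by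
    rw [← Nat.cast_prod]
    haveI : NeZero (p ^ 2) := ⟨pow_ne_zero 2 hp.ne_zero⟩
    rw [ZMod.isUnit_iff_coprime]
    apply Nat.Coprime.prod_left
    intro j hj
    rw [hS, Finset.mem_filter] at hj
    exact Nat.Coprime.pow_right 2 ((hp.coprime_iff_not_dvd.mpr hj.2).symm)
  exact hB.mul_right_cancel (by rw [keyZ, mul_comm])

lemma main_zmod (p : ℕ) (hp : p.Prime) (hp3 : 3 ≤ p) :
    ∀ f, 1 ≤ f → (((p ^ f - 1).choose (p ^ (f - 1)) : ℕ) : ZMod (p ^ 2)) =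
      (p : ZMod (p ^ 2)) - 1 := by
  intro f hf
  induction f, hf using Nat.le_induction with
  | base =>
    simp only [pow_one, Nat.sub_self, pow_zero, Nat.choose_one_right]
    rw [Nat.cast_sub hp.one_le]
    simp
  | succ n hn IH =>
    obtain ⟨k, rfl⟩ : ∃ k, n = k + 1 := ⟨n - 1, by omega⟩
    have e1 : p ^ (k + 1 + 1) = p * (p * p ^ k) := by ring
    have e2 : p ^ (k + 1 + 1 - 1) = p * p ^ k := by
      rw [Nat.add_sub_cancel]; ring
    rw [e1, e2, step_zmod p (p ^ k) hp hp3 (Nat.one_le_iff_ne_zero.mpr (pow_ne_zero k hp.ne_zero))]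
    have e3 : p * p ^ k = p ^ (k + 1) := by ring
    have e4 : p ^ k = p ^ (k + 1 - 1) := by rw [Nat.add_sub_cancel]
    rw [e3, e4]
    exact IH

theorem stmt4 (p : ℕ) (hp : p.Prime) (hp3 : 3 ≤ p) (f : ℕ) (hf : 2 ≤ f) :
    (((p ^ f - 1).choose (p ^ (f - 1)) : ℤ)) ≡ (p : ℤ) - 1 [ZMOD ((p : ℤ) ^ 2)] := by
  rw [show ((p : ℤ) ^ 2) = ((p ^ 2 : ℕ) : ℤ) from by push_cast; ring,
    ← ZMod.intCast_eq_intCast_iff]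
  push_cast
  exact main_zmod p hp hp3 f (by omega)
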